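/- Fix real α ≥ 0 with α ≠ 1, and for x ∈ (0,1) let g_α(x) = (x^{α−1}·(1 − ln(x^{α−1})) − 1)/(α−1)², which is the derivative with respect to α of the surprise function σ_α(x) = (1 − x^{α−1})/(α−1). Then (i) g_α(x) < 0 for every x ∈ (0,1), and (ii) g_α is strictly increasing on (0,1): for 0 < x₁ < x₂ < 1, g_α(x₁) < g_α(x₂). -/

import Mathlib

/-- The surprise function `σ_α` on `(0,1)`. -/
noncomputable def surprise (α x : ℝ) : ℝ :=
  if α = 1 then -Real.log x else (1 - x ^ (α - 1)) / (α - 1)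

/-- The derivative of `α ↦ σ_α(x)` with respect to `α` (for `α ≠ 1`). -/
noncomputable def surpriseDeriv (α x : ℝ) : ℝ :=
  (x ^ (α - 1) * (1 - Real.log (x ^ (α - 1))) - 1) / (α - 1) ^ 2

/-- Key inequality: `t (1 - log t) < 1` for positive `t ≠ 1`. -/
lemma aux_key {t : ℝ} (ht : 0 < t) (ht1 : t ≠ 1) : t * (1 - Real.log t) < 1 := by
  set s := Real.log t with hs
  have hsne : s ≠ 0 := by
    intro h
    rcases Real.log_eq_zero.mp (hs ▸ h) with h' | h' | h'
    · exact ht.ne' h'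
    · exact ht1 h'
    · nlinarith
  have h1 : (-s) + 1 < Real.exp (-s) := Real.add_one_lt_exp (neg_ne_zero.mpr hsne)
  have het : Real.exp s = t := Real.exp_log ht
  have := mul_lt_mul_of_pos_left h1 ht
  calc t * (1 - s) = t * (-s + 1) := by ring
    _ < t * Real.exp (-s) := this
    _ = Real.exp s * Real.exp (-s) := by rw [het]
    _ = 1 := by rw [← Real.exp_add]; simp

/-- Derivative of `surpriseDeriv α` with respect to `x`. -/
lemma aux_hasDerivAt_x (α : ℝ) (hα1 : α ≠ 1) {x : ℝ} (hx : 0 < x) :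
    HasDerivAt (surpriseDeriv α) (-Real.log x * x ^ (α - 2)) x := by
  have hp : α - 1 ≠ 0 := sub_ne_zero.mpr hα1
  have h1 : HasDerivAt (fun y : ℝ => y ^ (α - 1)) ((α - 1) * x ^ (α - 2)) x := by
    have := Real.hasDerivAt_rpow_const (p := α - 1) (Or.inl hx.ne')
    convert this using 2
    congr 1
    ring
  have h2 : HasDerivAt (fun y : ℝ => 1 - (α - 1) * Real.log y)
      (-((α - 1) * x⁻¹)) x :=
    ((Real.hasDerivAt_log hx.ne').const_mul (α - 1)).const_sub 1
  have h3 := ((h1.mul h2).sub_const 1).div_const ((α - 1) ^ 2)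
  have hpow : x ^ (α - 1) * x⁻¹ = x ^ (α - 2) := by
    rw [← Real.rpow_neg_one x, ← Real.rpow_add hx]
    congr 1
    ring
  have h4 : HasDerivAt
      (fun y : ℝ => (y ^ (α - 1) * (1 - (α - 1) * Real.log y) - 1) / (α - 1) ^ 2)
      (-Real.log x * x ^ (α - 2)) x := by
    refine h3.congr_deriv ?_
    rw [show x ^ (α - 1) * -((α - 1) * x⁻¹) = -((α - 1) * x ^ (α - 2)) from by
      rw [← hpow]; ring]
    field_simp
    ring
  refine h4.congr_of_eventuallyEq ?_
  filter_upwards [eventually_gt_nhds hx] with y hy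
  rw [surpriseDeriv, Real.log_rpow hy]

/-- for fixed `α ≥ 0`, `α ≠ 1`: `g_α` is the `α`-derivative of the
surprise, is negative on `(0,1)`, and is strictly increasing on `(0,1)`. -/
theorem surpriseDeriv_neg_and_strictMono (α : ℝ) (hα : 0 ≤ α) (hα1 : α ≠ 1) :
    (∀ x ∈ Set.Ioo (0 : ℝ) 1, HasDerivAt (fun β => surprise β x) (surpriseDeriv α x) α) ∧
    (∀ x ∈ Set.Ioo (0 : ℝ) 1, surpriseDeriv α x < 0) ∧
    (∀ x₁ x₂ : ℝ, 0 < x₁ → x₁ < x₂ → x₂ < 1 →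
      surpriseDeriv α x₁ < surpriseDeriv α x₂) := by
  have hp : α - 1 ≠ 0 := sub_ne_zero.mpr hα1
  refine ⟨?_, ?_, ?_⟩
  · -- the α-derivative
    rintro x ⟨hx0, hx1⟩
    have hr : HasDerivAt (fun β : ℝ => x ^ (β - 1)) (x ^ (α - 1) * Real.log x) α := by
      have h := (Real.hasStrictDerivAt_const_rpow hx0 (α - 1)).hasDerivAt
      have h2 : HasDerivAt (fun β : ℝ => β - 1) 1 α := (hasDerivAt_id α).sub_const 1
      exact (h.comp α h2).congr_deriv (mul_one _)
    have hN : HasDerivAt (fun β : ℝ => 1 - x ^ (β - 1))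
        (-(x ^ (α - 1) * Real.log x)) α := hr.const_sub 1
    have hD : HasDerivAt (fun β : ℝ => β - 1) 1 α := (hasDerivAt_id α).sub_const 1
    have h := hN.div hD hp
    have heq : HasDerivAt (fun β : ℝ => (1 - x ^ (β - 1)) / (β - 1))
        (surpriseDeriv α x) α := by
      refine h.congr_deriv ?_
      rw [surpriseDeriv, Real.log_rpow hx0]
      field_simp
      ring
    refine heq.congr_of_eventuallyEq ?_
    filter_upwards [eventually_ne_nhds hα1] with β hβ
    rw [surprise, if_neg hβ]
  · -- negativity
    rintro x ⟨hx0, hx1⟩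
    have ht0 : (0 : ℝ) < x ^ (α - 1) := Real.rpow_pos_of_pos hx0 _
    have ht1 : x ^ (α - 1) ≠ 1 := by
      intro h
      have hlog : Real.log (x ^ (α - 1)) = 0 := by rw [h]; simp
      rw [Real.log_rpow hx0] at hlog
      have hlx : Real.log x ≠ 0 := by
        intro h'
        rcases Real.log_eq_zero.mp h' with h'' | h'' | h'' <;> nlinarith
      rcases mul_eq_zero.mp hlog with h' | h'
      · exact hp h'
      · exact hlx h'
    have hkey := aux_key ht0 ht1
    rw [surpriseDeriv]
    apply div_neg_of_neg_of_pos
    · linarith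
    · rcases hp.lt_or_gt with h | h <;> nlinarith
  · -- strict monotonicity
    intro x₁ x₂ hx₁ hlt hx₂
    have hmono : StrictMonoOn (surpriseDeriv α) (Set.Ioo 0 1) := by
      apply strictMonoOn_of_deriv_pos (convex_Ioo 0 1)
      · intro y hy
        exact (aux_hasDerivAt_x α hα1 hy.1).continuousAt.continuousWithinAt
      · intro y hy
        rw [interior_Ioo] at hy
        rw [(aux_hasDerivAt_x α hα1 hy.1).deriv]
        have hly : Real.log y < 0 := Real.log_neg hy.1 hy.2
        have : (0:ℝ) < y ^ (α - 2) := Real.rpow_pos_of_pos hy.1 _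
        nlinarith
    exact hmono ⟨hx₁, hlt.trans hx₂⟩ ⟨hx₁.trans hlt, hx₂⟩ hlt
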